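/- The number of connected components of the amoeba complement ℝ^n ∖ 𝒜_p is at least equal to the number of vertices (extreme points) of the Newton polytope 𝒩_p. -/

import Mathlib

open MeasureTheory Real

noncomputable section

/-- Evaluation of the Laurent polynomial with support `A` and coefficients `c`
at the point `z`. -/
def lEval {n : ℕ} (A : Finset (Fin n → ℤ)) (c : (Fin n → ℤ) → ℂ)
    (z : Fin n → ℂ) : ℂ :=
  ∑ α ∈ A, c α * ∏ i, z i ^ α i

/-- The coordinatewise logarithm of moduli. -/
def logMap {n : ℕ} (z : Fin n → ℂ) : Fin n → ℝ :=
  fun i => Real.log (‖z i‖)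

/-- The amoeba of the Laurent polynomial with support `A` and coefficients `c`. -/
def amoeba {n : ℕ} (A : Finset (Fin n → ℤ)) (c : (Fin n → ℤ) → ℂ) :
    Set (Fin n → ℝ) :=
  logMap '' {z | (∀ i, z i ≠ 0) ∧ lEval A c z = 0}

/-- The point of the complex torus with radial coordinates `e^u` and angles `θ`. -/
def tPt {n : ℕ} (u θ : Fin n → ℝ) : Fin n → ℂ :=
  fun i => Complex.exp (u i + θ i * Complex.I)

/-- The cube `[0, 2π]^n`. -/
def cube (n : ℕ) : Set (Fin n → ℝ) := Set.univ.pi fun _ => Set.Icc 0 (2 * π)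

/-- The order vector of a point `u` in the amoeba complement. -/
def order {n : ℕ} (A : Finset (Fin n → ℤ)) (c : (Fin n → ℤ) → ℂ)
    (u : Fin n → ℝ) : Fin n → ℂ := fun j =>
  (((2 * π) ^ n : ℝ) : ℂ)⁻¹ *
    ∫ θ in cube n,
      (∑ α ∈ A, c α * (α j : ℂ) * ∏ i, tPt u θ i ^ α i) / lEval A c (tPt u θ)

/-- The Ronkin function. -/
def ronkin {n : ℕ} (A : Finset (Fin n → ℤ)) (c : (Fin n → ℤ) → ℂ)
    (x : Fin n → ℝ) : ℝ :=
  ((2 * π) ^ n)⁻¹ * ∫ θ in cube n, Real.log (‖lEval A c (tPt x θ)‖)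

/-- The Newton polytope of the support `A`. -/
def newton {n : ℕ} (A : Finset (Fin n → ℤ)) : Set (Fin n → ℝ) :=
  convexHull ℝ ((fun (α : Fin n → ℤ) (i : Fin n) => (α i : ℝ)) '' (A : Set (Fin n → ℤ)))

end


section AuxWinding
open intervalIntegral
noncomputable section Winding

set_option linter.unusedSectionVars false

variable {κ : Type*} [DecidableEq κ] (s : Finset κ) (m : κ → ℤ)

/-- `H a t = ∑ a β e^{i m β t}`. -/
def hFun (a : κ → ℂ) (t : ℝ) : ℂ :=
  ∑ β ∈ s, a β * Complex.exp (((m β : ℂ) * Complex.I) * t)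

/-- derivative of `hFun` in `t`. -/
def nFun (a : κ → ℂ) (t : ℝ) : ℂ :=
  ∑ β ∈ s, ((m β : ℂ) * Complex.I) * (a β * Complex.exp (((m β : ℂ) * Complex.I) * t))

/-- winding number (times 2πi). -/
def wind (a : κ → ℂ) : ℂ := ∫ t in (0:ℝ)..(2*π), nFun s m a t / hFun s m a t

lemma hasDerivAt_hFun (a : κ → ℂ) (t : ℝ) :
    HasDerivAt (hFun s m a) (nFun s m a t) t := by
  apply HasDerivAt.fun_sum
  intro β _
  have h1 : HasDerivAt (fun t : ℝ => ((m β : ℂ) * Complex.I) * (t : ℂ))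
      ((m β : ℂ) * Complex.I) t := by
    simpa using (Complex.ofRealCLM.hasDerivAt (x := t)).const_mul ((m β : ℂ) * Complex.I)
  have h2 := (h1.cexp).const_mul (a β)
  exact h2.congr_deriv (by ring)

lemma continuous_hFun (a : κ → ℂ) : Continuous (hFun s m a) := by
  unfold hFun
  fun_prop

lemma continuous_nFun (a : κ → ℂ) : Continuous (nFun s m a) := by
  unfold nFun
  fun_prop

lemma hFun_periodic (a : κ → ℂ) (t : ℝ) : hFun s m a (t + 2*π) = hFun s m a t := by
  unfold hFun
  refine Finset.sum_congr rfl fun β _ => ?_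
  have : ((m β : ℂ) * Complex.I) * ((t : ℝ) + 2*π : ℝ) =
      ((m β : ℂ) * Complex.I) * t + (m β : ℂ) * (2 * π * Complex.I) := by
    push_cast; ring
  rw [this, Complex.exp_add, Complex.exp_int_mul, Complex.exp_two_pi_mul_I, one_zpow, mul_one]

lemma wind_int (a : κ → ℂ) (h : ∀ t, hFun s m a t ≠ 0) :
    ∃ k : ℤ, wind s m a = k * (2 * π * Complex.I) := by
  set g : ℝ → ℂ := fun t => nFun s m a t / hFun s m a t with hg
  have hgc : Continuous g := (continuous_nFun s m a).div (continuous_hFun s m a) h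
  set F : ℝ → ℂ := fun t => ∫ τ in (0:ℝ)..t, g τ with hF
  have hFderiv : ∀ t, HasDerivAt F (g t) t := fun t =>
    intervalIntegral.integral_hasDerivAt_right (hgc.intervalIntegrable 0 t)
      (hgc.stronglyMeasurableAtFilter _ _) hgc.continuousAt
  set φ : ℝ → ℂ := fun t => hFun s m a t * Complex.exp (-F t) with hφ
  have hφderiv : ∀ t, HasDerivAt φ 0 t := by
    intro t
    have h1 := (hasDerivAt_hFun s m a t).mul (((hFderiv t).neg).cexp)
    have hd : hFun s m a t * g t = nFun s m a t := mul_div_cancel₀ _ (h t)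
    exact h1.congr_deriv (by linear_combination (-(Complex.exp ((-F) t))) * hd)
  have hconst : φ (2*π) = φ 0 := by
    have : ∀ x, deriv φ x = 0 := fun x => (hφderiv x).deriv
    exact is_const_of_deriv_eq_zero (fun x => (hφderiv x).differentiableAt) this _ _
  have hF0 : F 0 = 0 := by simp [hF]
  have hper : hFun s m a (2*π) = hFun s m a 0 := by
    simpa using hFun_periodic s m a 0
  rw [hφ] at hconst
  simp only [hF0, neg_zero, Complex.exp_zero, mul_one, hper] at hconst
  have hexp1 : Complex.exp (-F (2*π)) = 1 :=
    (mul_eq_left₀ (h 0)).mp hconst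
  rw [Complex.exp_eq_one_iff] at hexp1
  obtain ⟨k, hk⟩ := hexp1
  refine ⟨-k, ?_⟩
  have : wind s m a = F (2*π) := rfl
  rw [this, ← neg_eq_iff_eq_neg.2 hk.symm]
  push_cast
  ring

end Winding

section More
set_option linter.unusedSectionVars false
variable {κ : Type*} [DecidableEq κ] (s : Finset κ) (m : κ → ℤ)

lemma wind_continuous {X : Type*} [TopologicalSpace X] (a : X → κ → ℂ)
    (ha : Continuous a) (h : ∀ x t, hFun s m (a x) t ≠ 0) :
    Continuous fun x => wind s m (a x) := by
  have hH : Continuous fun p : X × ℝ => hFun s m (a p.1) p.2 := by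
    unfold hFun
    refine continuous_finset_sum _ fun β _ => ?_
    exact ((continuous_apply β).comp (ha.comp continuous_fst)).mul
      ((Complex.continuous_exp.comp (continuous_const.mul
        (Complex.continuous_ofReal.comp continuous_snd))))
  have hN : Continuous fun p : X × ℝ => nFun s m (a p.1) p.2 := by
    unfold nFun
    refine continuous_finset_sum _ fun β _ => ?_
    exact continuous_const.mul (((continuous_apply β).comp (ha.comp continuous_fst)).mul
      ((Complex.continuous_exp.comp (continuous_const.mul
        (Complex.continuous_ofReal.comp continuous_snd)))))
  have : Continuous (Function.uncurry fun (x : X) (t : ℝ) =>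
      nFun s m (a x) t / hFun s m (a x) t) :=
    hN.div hH (fun p => h p.1 p.2)
  exact intervalIntegral.continuous_parametric_intervalIntegral_of_continuous' this 0 (2*π)

lemma wind_const_on {X : Type*} [TopologicalSpace X] [PreconnectedSpace X]
    (a : X → κ → ℂ) (ha : Continuous a) (h : ∀ x t, hFun s m (a x) t ≠ 0)
    (x y : X) : wind s m (a x) = wind s m (a y) := by
  set W := fun x => wind s m (a x) with hW
  have hWc : Continuous W := wind_continuous s m a ha h
  have hint : ∀ x, ∃ k : ℤ, W x = k * (2 * π * Complex.I) := fun x =>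
    wind_int s m (a x) (h x)
  set G : X → ℝ := fun x => (W x / (2 * π * Complex.I)).re with hG
  have h2pi : (2 * Real.pi * Complex.I : ℂ) ≠ 0 := by
    simp [Real.pi_ne_zero, Complex.I_ne_zero]
  have hGval : ∀ x, ∃ k : ℤ, G x = k ∧ W x = k * (2 * π * Complex.I) := by
    intro x
    obtain ⟨k, hk⟩ := hint x
    refine ⟨k, ?_, hk⟩
    rw [hG]
    simp only [hk]
    rw [mul_div_assoc, div_self h2pi, mul_one]
    simp
  have hGc : Continuous G := (Complex.continuous_re.comp (hWc.div_const _))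
  obtain ⟨k₁, hk₁, hWx⟩ := hGval x
  obtain ⟨k₂, hk₂, hWy⟩ := hGval y
  have hkk : k₁ = k₂ := by
    by_contra hne
    rcases lt_or_gt_of_ne hne with hlt | hlt
    · have hmem : ((k₁ : ℝ) + 1/2) ∈ Set.Icc (G x) (G y) := by
        rw [hk₁, hk₂]
        constructor
        · linarith
        · have : (k₁ : ℝ) + 1 ≤ k₂ := by exact_mod_cast hlt
          linarith
      obtain ⟨z, hz⟩ := intermediate_value_univ x y hGc hmem
      obtain ⟨k, hk, -⟩ := hGval z
      rw [hk] at hz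
      have : (2*k : ℝ) = 2*k₁ + 1 := by rw [hz]; ring
      have : (2*k : ℤ) = 2*k₁ + 1 := by exact_mod_cast this
      omega
    · have hmem : ((k₂ : ℝ) + 1/2) ∈ Set.Icc (G y) (G x) := by
        rw [hk₁, hk₂]
        constructor
        · linarith
        · have : (k₂ : ℝ) + 1 ≤ k₁ := by exact_mod_cast hlt
          linarith
      obtain ⟨z, hz⟩ := intermediate_value_univ y x hGc hmem
      obtain ⟨k, hk, -⟩ := hGval z
      rw [hk] at hz
      have : (2*k : ℝ) = 2*k₂ + 1 := by rw [hz]; ring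
      have : (2*k : ℤ) = 2*k₂ + 1 := by exact_mod_cast this
      omega
  show W x = W y
  rw [hWx, hWy, hkk]

lemma wind_monomial (α : κ) (hα : α ∈ s) (a : κ → ℂ) (haα : a α ≠ 0)
    (h0 : ∀ β ∈ s, β ≠ α → a β = 0) :
    wind s m a = (m α : ℂ) * (2 * π * Complex.I) := by
  have hH : ∀ t : ℝ, hFun s m a t = a α * Complex.exp (((m α : ℂ) * Complex.I) * t) := by
    intro t
    rw [hFun, Finset.sum_eq_single_of_mem α hα]
    intro β hβ hne
    rw [h0 β hβ hne, zero_mul]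
  have hN : ∀ t : ℝ, nFun s m a t =
      ((m α : ℂ) * Complex.I) * (a α * Complex.exp (((m α : ℂ) * Complex.I) * t)) := by
    intro t
    rw [nFun, Finset.sum_eq_single_of_mem α hα]
    intro β hβ hne
    rw [h0 β hβ hne, zero_mul, mul_zero]
  have heq : wind s m a = ∫ t in (0:ℝ)..(2*π), ((m α : ℂ) * Complex.I) := by
    unfold wind
    refine intervalIntegral.integral_congr fun t _ => ?_
    rw [hH, hN]
    have hne : a α * Complex.exp (((m α : ℂ) * Complex.I) * t) ≠ 0 :=
      mul_ne_zero haα (Complex.exp_ne_zero _)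
    field_simp
  rw [heq, intervalIntegral.integral_const]
  rw [sub_zero]
  rw [Complex.real_smul]
  push_cast
  ring

end More

end AuxWinding

noncomputable section AmoebaApp
set_option linter.unusedSectionVars false
open intervalIntegral

variable {n : ℕ} (A : Finset (Fin n → ℤ)) (c : (Fin n → ℤ) → ℂ)

/-- real pairing `⟨β, u⟩`. -/
def dotR (β : Fin n → ℤ) (u : Fin n → ℝ) : ℝ := ∑ i, (β i : ℝ) * u i

/-- coefficients of the one-variable circle family over `u`. -/
def coefA (u : Fin n → ℝ) : (Fin n → ℤ) → ℂ :=
  fun β => c β * Complex.exp ((dotR β u : ℝ) : ℂ)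

/-- `α` dominates at `u`. -/
def domin (α : Fin n → ℤ) (u : Fin n → ℝ) : Prop :=
  ∑ β ∈ A.erase α, ‖c β‖ * Real.exp (dotR β u) <
    ‖c α‖ * Real.exp (dotR α u)

lemma continuous_coefA : Continuous fun u : Fin n → ℝ => coefA c u := by
  refine continuous_pi fun β => ?_
  apply continuous_const.mul
  refine Complex.continuous_exp.comp (Complex.continuous_ofReal.comp ?_)
  exact continuous_finset_sum _ fun i _ => continuous_const.mul (continuous_apply i)

/-- the point on the torus over `u` with angle `t` in coordinate `j`, `0` elsewhere. -/
def zpt (u : Fin n → ℝ) (j : Fin n) (t : ℝ) : Fin n → ℂ :=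
  fun i => Complex.exp ((u i : ℂ) + (if i = j then (t : ℂ) * Complex.I else 0))

lemma hFun_eq_lEval (u : Fin n → ℝ) (j : Fin n) (t : ℝ) :
    hFun A (fun β => β j) (coefA c u) t = lEval A c (zpt u j t) := by
  unfold hFun lEval coefA zpt
  refine Finset.sum_congr rfl fun β _ => ?_
  have hprod : ∏ i, (Complex.exp ((u i : ℂ) + (if i = j then (t : ℂ) * Complex.I else 0))) ^ β i
      = Complex.exp (((dotR β u : ℝ) : ℂ) + ((β j : ℂ) * Complex.I) * t) := by
    have h1 : ∀ i : Fin n,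
        (Complex.exp ((u i : ℂ) + (if i = j then (t : ℂ) * Complex.I else 0))) ^ β i
        = Complex.exp ((β i : ℂ) * ((u i : ℂ) + (if i = j then (t : ℂ) * Complex.I else 0))) :=
      fun i => (Complex.exp_int_mul _ _).symm
    rw [Finset.prod_congr rfl fun i _ => h1 i, ← Complex.exp_sum]
    congr 1
    have : ∀ i : Fin n, (β i : ℂ) * ((u i : ℂ) + (if i = j then (t : ℂ) * Complex.I else 0))
        = (β i : ℂ) * (u i : ℂ) + (if i = j then (β i : ℂ) * ((t : ℂ) * Complex.I) else 0) := by
      intro i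
      split <;> ring
    rw [Finset.sum_congr rfl fun i _ => this i, Finset.sum_add_distrib]
    congr 1
    · unfold dotR
      push_cast
      rfl
    · rw [Finset.sum_ite_eq' Finset.univ j (fun i => (β i : ℂ) * ((t : ℂ) * Complex.I))]
      simp
      ring
  rw [hprod, Complex.exp_add]
  ring

lemma hFun_ne_zero_of_not_mem (u : Fin n → ℝ) (hu : u ∉ amoeba A c) (j : Fin n) (t : ℝ) :
    hFun A (fun β => β j) (coefA c u) t ≠ 0 := by
  intro h0
  apply hu
  refine ⟨zpt u j t, ⟨fun i => Complex.exp_ne_zero _, ?_⟩, ?_⟩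
  · rw [← hFun_eq_lEval]; exact h0
  · funext i
    unfold logMap zpt
    rw [Complex.norm_exp]
    have : ((u i : ℂ) + (if i = j then (t : ℂ) * Complex.I else 0)).re = u i := by
      split <;> simp
    rw [this, Real.log_exp]

lemma abs_term (z : Fin n → ℂ) (hz : ∀ i, z i ≠ 0) (u : Fin n → ℝ) (hlog : logMap z = u)
    (β : Fin n → ℤ) : ‖c β * ∏ i, z i ^ β i‖
      = ‖c β‖ * Real.exp (dotR β u) := by
  rw [norm_mul]
  congr 1
  rw [norm_prod]
  have habs : ∀ i, ‖z i‖ = Real.exp (u i) := by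
    intro i
    have : Real.log (‖z i‖) = u i := congrFun hlog i
    rw [← this, Real.exp_log (norm_pos_iff.mpr (hz i))]
  have hterm : ∀ i : Fin n, ‖z i ^ β i‖ = Real.exp (u i * (β i : ℝ)) := by
    intro i
    rw [norm_zpow, habs i, ← Real.rpow_intCast, ← Real.exp_mul]
  rw [Finset.prod_congr rfl fun i _ => hterm i, ← Real.exp_sum]
  congr 1
  unfold dotR
  exact Finset.sum_congr rfl fun i _ => mul_comm _ _

lemma domin_not_mem_amoeba (α : Fin n → ℤ) (hα : α ∈ A) {u : Fin n → ℝ}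
    (hd : domin A c α u) : u ∉ amoeba A c := by
  rintro ⟨z, ⟨hz, hzero⟩, hlog⟩
  have hsplit : lEval A c z
      = c α * ∏ i, z i ^ α i + ∑ β ∈ A.erase α, c β * ∏ i, z i ^ β i := by
    rw [lEval, ← Finset.add_sum_erase A _ hα]
  have h1 : ‖c α * ∏ i, z i ^ α i‖
      = ‖∑ β ∈ A.erase α, c β * ∏ i, z i ^ β i‖ := by
    have : c α * ∏ i, z i ^ α i = -(∑ β ∈ A.erase α, c β * ∏ i, z i ^ β i) := by
      rw [hsplit] at hzero
      linear_combination hzero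
    rw [this, norm_neg]
  have h2 : ‖∑ β ∈ A.erase α, c β * ∏ i, z i ^ β i‖
      ≤ ∑ β ∈ A.erase α, ‖c β‖ * Real.exp (dotR β u) := by
    refine le_trans (norm_sum_le _ _) (le_of_eq ?_)
    exact Finset.sum_congr rfl fun β _ => abs_term c z hz u hlog β
  rw [abs_term c z hz u hlog α] at h1
  have := hd
  rw [domin] at this
  rw [h1] at this
  exact absurd (lt_of_le_of_lt h2 this) (lt_irrefl _)

lemma wind_const_on_compl {S : Set (Fin n → ℝ)} (hS : IsPreconnected S)
    (hSc : S ⊆ (amoeba A c)ᶜ) {u v : Fin n → ℝ} (hu : u ∈ S) (hv : v ∈ S) (j : Fin n) :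
    wind A (fun β => β j) (coefA c u) = wind A (fun β => β j) (coefA c v) := by
  haveI : PreconnectedSpace S := Subtype.preconnectedSpace hS
  exact wind_const_on A (fun β => β j) (fun x : S => coefA c x.1)
    ((continuous_coefA c).comp continuous_subtype_val)
    (fun x t => hFun_ne_zero_of_not_mem A c x.1 (hSc x.2) j t) ⟨u, hu⟩ ⟨v, hv⟩

lemma abs_coef_exp (u : Fin n → ℝ) (β : Fin n → ℤ) (j : Fin n) (t : ℝ) :
    ‖coefA c u β * Complex.exp (((β j : ℂ) * Complex.I) * t)‖
      = ‖c β‖ * Real.exp (dotR β u) := by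
  rw [coefA, norm_mul, norm_mul, Complex.norm_exp, Complex.norm_exp]
  have h1 : ((dotR β u : ℝ) : ℂ).re = dotR β u := by simp
  have h2 : (((β j : ℂ) * Complex.I) * (t : ℂ)).re = 0 := by simp
  rw [h1, h2, Real.exp_zero, mul_one]

lemma wind_of_domin (α : Fin n → ℤ) (hα : α ∈ A) (hcα : c α ≠ 0) {u : Fin n → ℝ}
    (hd : domin A c α u) (j : Fin n) :
    wind A (fun β => β j) (coefA c u) = (α j : ℂ) * (2 * π * Complex.I) := by
  classical
  set X := (Set.Icc (0:ℝ) 1) with hX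
  haveI : PreconnectedSpace X := Subtype.preconnectedSpace isPreconnected_Icc
  set a : X → (Fin n → ℤ) → ℂ :=
    fun s β => (if β = α then 1 else ((s : ℝ) : ℂ)) * coefA c u β with ha
  have hacont : Continuous a := by
    refine continuous_pi fun β => ?_
    refine Continuous.mul ?_ continuous_const
    by_cases hβ : β = α
    · simp only [ha, if_pos hβ]
      exact continuous_const
    · simp only [ha, if_neg hβ]
      exact Complex.continuous_ofReal.comp continuous_subtype_val
  have hne : ∀ (x : X) (t : ℝ), hFun A (fun β => β j) (a x) t ≠ 0 := by
    intro x t h0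
    have hx01 : (0:ℝ) ≤ (x:ℝ) ∧ (x:ℝ) ≤ 1 := x.2
    have hsplit : hFun A (fun β => β j) (a x) t
        = a x α * Complex.exp (((α j : ℂ) * Complex.I) * t)
          + ∑ β ∈ A.erase α, a x β * Complex.exp (((β j : ℂ) * Complex.I) * t) := by
      rw [hFun, ← Finset.add_sum_erase A _ hα]
    have heq : a x α * Complex.exp (((α j : ℂ) * Complex.I) * t)
        = -(∑ β ∈ A.erase α, a x β * Complex.exp (((β j : ℂ) * Complex.I) * t)) := by
      rw [hsplit] at h0
      linear_combination h0
    have hL : ‖a x α * Complex.exp (((α j : ℂ) * Complex.I) * t)‖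
        = ‖c α‖ * Real.exp (dotR α u) := by
      have : a x α = coefA c u α := by simp [ha]
      rw [this]
      exact abs_coef_exp c u α j t
    have hR : ‖∑ β ∈ A.erase α, a x β * Complex.exp (((β j : ℂ) * Complex.I) * t)‖
        ≤ ∑ β ∈ A.erase α, ‖c β‖ * Real.exp (dotR β u) := by
      refine le_trans (norm_sum_le _ _) (Finset.sum_le_sum fun β hβ => ?_)
      have hβα : β ≠ α := Finset.ne_of_mem_erase hβ
      have : a x β * Complex.exp (((β j : ℂ) * Complex.I) * t)
          = ((x : ℝ) : ℂ) * (coefA c u β * Complex.exp (((β j : ℂ) * Complex.I) * t)) := by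
        simp [ha, if_neg hβα]
        ring
      rw [this, norm_mul, abs_coef_exp c u β j t]
      have : ‖((x : ℝ) : ℂ)‖ ≤ 1 := by
        rw [Complex.norm_real, Real.norm_of_nonneg hx01.1]
        exact hx01.2
      nlinarith [norm_nonneg (c β), Real.exp_pos (dotR β u),
        mul_nonneg (norm_nonneg (c β)) (Real.exp_pos (dotR β u)).le]
    have hfin : ‖c α‖ * Real.exp (dotR α u)
        ≤ ∑ β ∈ A.erase α, ‖c β‖ * Real.exp (dotR β u) := by
      rw [← hL, heq, norm_neg]
      exact hR
    have hlt := hd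
    rw [domin] at hlt
    exact absurd (lt_of_le_of_lt hfin hlt) (lt_irrefl _)
  have hw := wind_const_on A (fun β => β j) a hacont hne
    ⟨1, by norm_num [hX]⟩ ⟨0, by norm_num [hX]⟩
  have h1 : a ⟨1, by norm_num [hX]⟩ = coefA c u := by
    funext β
    simp [ha]
  have h0 : wind A (fun β => β j) (a ⟨0, by norm_num [hX]⟩)
      = (α j : ℂ) * (2 * π * Complex.I) := by
    refine wind_monomial A (fun β => β j) α hα _ ?_ ?_
    · simp [ha, coefA, hcα, Complex.exp_ne_zero]
    · intro β hβ hβα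
      simp [ha, if_neg hβα]
  rw [h1] at hw
  rw [hw, h0]

/-- cast of an integer vector to a real vector. -/
def castR {n : ℕ} (β : Fin n → ℤ) : Fin n → ℝ := fun i => (β i : ℝ)

lemma f_castR (f : (Fin n → ℝ) →L[ℝ] ℝ) (β : Fin n → ℤ) :
    f (castR β) = ∑ i, (β i : ℝ) * f (Pi.single i 1) := by
  have h1 : castR β = ∑ i, (β i : ℝ) • (Pi.single i (1:ℝ) : Fin n → ℝ) := by
    funext j
    rw [Finset.sum_apply]
    simp [Pi.single_apply, castR]
  rw [h1, map_sum]
  refine Finset.sum_congr rfl fun i _ => ?_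
  rw [f.map_smul, smul_eq_mul]

lemma exists_domin (α : Fin n → ℤ) (hα : α ∈ A) (hc : ∀ β ∈ A, c β ≠ 0)
    (f : (Fin n → ℝ) →L[ℝ] ℝ)
    (hsep : ∀ β ∈ A, β ≠ α → f (castR β) < f (castR α)) :
    ∃ u : Fin n → ℝ, domin A c α u := by
  classical
  set g : ℝ → ℝ := fun t =>
    ∑ β ∈ A.erase α, ‖c β‖ * Real.exp (t * (f (castR β) - f (castR α))) with hg
  have hg0 : Filter.Tendsto g Filter.atTop (nhds 0) := by
    have : Filter.Tendsto (fun t : ℝ =>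
        (0:ℝ)) Filter.atTop (nhds 0) := tendsto_const_nhds
    have hsum : ∀ β ∈ A.erase α, Filter.Tendsto
        (fun t : ℝ => ‖c β‖ * Real.exp (t * (f (castR β) - f (castR α))))
        Filter.atTop (nhds 0) := by
      intro β hβ
      have hd : f (castR β) - f (castR α) < 0 := by
        have := hsep β (Finset.mem_of_mem_erase hβ) (Finset.ne_of_mem_erase hβ)
        linarith
      have h1 : Filter.Tendsto (fun t : ℝ => t * (f (castR β) - f (castR α)))
          Filter.atTop Filter.atBot := by
        exact Filter.Tendsto.atTop_mul_const_of_neg hd Filter.tendsto_id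
      have h2 := Real.tendsto_exp_atBot.comp h1
      have := h2.const_mul (‖c β‖)
      simpa using this
    have := tendsto_finset_sum (A.erase α) hsum
    simpa using this
  have hpos : (0:ℝ) < ‖c α‖ := norm_pos_iff.mpr (hc α hα)
  have hev : ∀ᶠ t in Filter.atTop, g t < ‖c α‖ :=
    hg0.eventually_lt_const hpos
  obtain ⟨t, ht⟩ := hev.exists
  refine ⟨fun i => t * f (Pi.single i 1), ?_⟩
  rw [domin]
  have hdot : ∀ β : Fin n → ℤ, dotR β (fun i => t * f (Pi.single i 1)) = t * f (castR β) := by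
    intro β
    rw [dotR, f_castR, Finset.mul_sum]
    exact Finset.sum_congr rfl fun i _ => by ring
  calc ∑ β ∈ A.erase α, ‖c β‖ * Real.exp (dotR β _)
      = Real.exp (t * f (castR α)) * g t := by
        rw [hg, Finset.mul_sum]
        refine Finset.sum_congr rfl fun β hβ => ?_
        rw [hdot β]
        have harg : t * (f (castR β) - f (castR α)) = t * f (castR β) - t * f (castR α) := by
          ring
        rw [harg, Real.exp_sub]
        field_simp
    _ < Real.exp (t * f (castR α)) * ‖c α‖ := by
        exact mul_lt_mul_of_pos_left ht (Real.exp_pos _)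
    _ = ‖c α‖ * Real.exp (dotR α _) := by
        rw [hdot α]; ring

lemma extreme_to_exposed {v : Fin n → ℝ}
    (hv : v ∈ Set.extremePoints ℝ (newton A)) :
    ∃ α ∈ A, castR α = v ∧ ∃ f : (Fin n → ℝ) →L[ℝ] ℝ,
      ∀ β ∈ A, β ≠ α → f (castR β) < f (castR α) := by
  classical
  set S : Set (Fin n → ℝ) := (fun (α : Fin n → ℤ) (i : Fin n) => (α i : ℝ)) '' (A : Set _)
    with hSdef
  have hvS : v ∈ S := extremePoints_convexHull_subset hv
  obtain ⟨α, hαA, hαv⟩ := hvS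
  have hnotin : v ∉ convexHull ℝ (S \ {v}) := by
    have h1 := (convex_convexHull ℝ S).mem_extremePoints_iff_mem_diff_convexHull_diff.mp hv
    intro hmem
    refine h1.2 (convexHull_mono ?_ hmem)
    intro x hx
    exact ⟨subset_convexHull ℝ S hx.1, hx.2⟩
  have hSfin : (S \ {v}).Finite := (A.finite_toSet.image _).subset Set.diff_subset
  have hclosed : IsClosed (convexHull ℝ (S \ {v})) := (hSfin.isCompact_convexHull ℝ).isClosed
  obtain ⟨f, r, hfr, hrv⟩ := geometric_hahn_banach_closed_point
    (convex_convexHull ℝ _) hclosed hnotin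
  refine ⟨α, hαA, hαv, f, fun β hβ hβα => ?_⟩
  have hcastv : castR α = v := hαv
  have hβS : castR β ∈ S \ {v} := by
    refine ⟨⟨β, hβ, rfl⟩, ?_⟩
    intro hcontra
    apply hβα
    have : castR β = castR α := by rw [hcontra, hcastv]
    funext i
    have h2 := congrFun this i
    simp only [castR] at h2
    exact_mod_cast h2
  have := hfr _ (subset_convexHull ℝ _ hβS)
  rw [← hcastv] at hrv
  linarith

theorem stmt_1' (hA : A.Nonempty) (hc : ∀ α ∈ A, c α ≠ 0) :
    ∃ f : {v : Fin n → ℝ // v ∈ Set.extremePoints ℝ (newton A)} →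
      {C : Set (Fin n → ℝ) //
        ∃ u ∈ (amoeba A c)ᶜ, C = connectedComponentIn (amoeba A c)ᶜ u},
      Function.Injective f := by
  classical
  have key : ∀ v : {v : Fin n → ℝ // v ∈ Set.extremePoints ℝ (newton A)},
      ∃ α, α ∈ A ∧ castR α = v.1 ∧ ∃ u : Fin n → ℝ, domin A c α u := by
    intro v
    obtain ⟨α, hαA, hαv, f, hsep⟩ := extreme_to_exposed A v.2
    exact ⟨α, hαA, hαv, exists_domin A c α hαA hc f hsep⟩
  choose α hαA hαv u hu using key
  have hucompl : ∀ v, u v ∈ (amoeba A c)ᶜ := fun v =>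
    domin_not_mem_amoeba A c (α v) (hαA v) (hu v)
  refine ⟨fun v => ⟨connectedComponentIn (amoeba A c)ᶜ (u v), u v, hucompl v, rfl⟩, ?_⟩
  intro v w hvw
  have hcomp : connectedComponentIn (amoeba A c)ᶜ (u v)
      = connectedComponentIn (amoeba A c)ᶜ (u w) := by
    have h := congrArg Subtype.val hvw
    simpa using h
  have hSpre : IsPreconnected (connectedComponentIn (amoeba A c)ᶜ (u v)) :=
    isPreconnected_connectedComponentIn
  have hSsub : connectedComponentIn (amoeba A c)ᶜ (u v) ⊆ (amoeba A c)ᶜ :=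
    connectedComponentIn_subset _ _
  have huvS : u v ∈ connectedComponentIn (amoeba A c)ᶜ (u v) :=
    mem_connectedComponentIn (hucompl v)
  have huwS : u w ∈ connectedComponentIn (amoeba A c)ᶜ (u v) := by
    rw [hcomp]
    exact mem_connectedComponentIn (hucompl w)
  have hαeq : α v = α w := by
    funext j
    have h1 := wind_const_on_compl A c hSpre hSsub huvS huwS j
    rw [wind_of_domin A c (α v) (hαA v) (hc _ (hαA v)) (hu v) j,
        wind_of_domin A c (α w) (hαA w) (hc _ (hαA w)) (hu w) j] at h1
    have h2pi : (2 * Real.pi * Complex.I : ℂ) ≠ 0 := by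
      simp [Real.pi_ne_zero, Complex.I_ne_zero]
    have h2 : ((α v) j : ℂ) = ((α w) j : ℂ) := mul_right_cancel₀ h2pi h1
    exact_mod_cast h2
  apply Subtype.ext
  rw [← hαv v, ← hαv w, hαeq]

end AmoebaApp

/-- The number of connected components of the amoeba complement is at least
the number of vertices (extreme points) of the Newton polytope: there is an
injection from the set of vertices into the set of connected components. -/
theorem stmt_1 {n : ℕ} (A : Finset (Fin n → ℤ)) (c : (Fin n → ℤ) → ℂ)
    (hA : A.Nonempty) (hc : ∀ α ∈ A, c α ≠ 0) :
    ∃ f : {v : Fin n → ℝ // v ∈ Set.extremePoints ℝ (newton A)} →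
      {C : Set (Fin n → ℝ) //
        ∃ u ∈ (amoeba A c)ᶜ, C = connectedComponentIn (amoeba A c)ᶜ u},
      Function.Injective f :=
  stmt_1' A c hA hc
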